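/- Let m be a finite multiset of real numbers each of the form (2/3)·2^{-k} for some natural number k ≥ 1 (i.e., each element lies in {1/3, 1/6, 1/12, ...}), and let S be the sum of m. Then m can be partitioned into at most ⌊S⌋ sub-multisets each with sum at most 1, together with one remaining sub-multiset with sum strictly less than 1. -/

import Mathlib

/-- Packing lemma over ℕ: from a multiset of powers of two all dividing `N`,
with total at least `N`, we can extract a sub-multiset summing exactly to `N`. -/
lemma packA (w : ℕ → ℕ) :
    ∀ (s : Multiset ℕ) (N : ℕ), (∀ x ∈ s, ∃ i : ℕ, w x = 2^i) →
      (∀ x ∈ s, w x ∣ N) → N ≤ (s.map w).sum →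
      ∃ t, t ≤ s ∧ (t.map w).sum = N := by
  intro s
  induction s using Multiset.strongInductionOn with
  | _ s IH =>
    intro N hpow hdvd hsum
    rcases Nat.eq_zero_or_pos N with h0 | hN
    · exact ⟨0, Multiset.zero_le _, by simp [h0]⟩
    have hs : s.toFinset.Nonempty := by
      rcases Multiset.exists_mem_of_ne_zero (s := s) (by rintro rfl; simp at hsum; omega)
        with ⟨x, hx⟩
      exact ⟨x, Multiset.mem_toFinset.2 hx⟩
    obtain ⟨x, hxF, hxmax⟩ := Finset.exists_max_image s.toFinset w hs
    have hxs : x ∈ s := Multiset.mem_toFinset.1 hxF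
    have hxN : w x ≤ N := Nat.le_of_dvd hN (hdvd x hxs)
    have hcons : x ::ₘ s.erase x = s := Multiset.cons_erase hxs
    have hsum' : (s.map w).sum = w x + ((s.erase x).map w).sum := by
      conv_lhs => rw [← hcons]
      simp
    have IH' := IH (s.erase x) (Multiset.erase_lt.2 hxs) (N - w x)
      (fun y hy => hpow y (Multiset.mem_of_mem_erase hy))
      (fun y hy => by
        have hyN := hdvd y (Multiset.mem_of_mem_erase hy)
        have hyx : w y ∣ w x := by
          obtain ⟨i, hi⟩ := hpow y (Multiset.mem_of_mem_erase hy)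
          obtain ⟨j, hj⟩ := hpow x hxs
          have hle : w y ≤ w x := hxmax y (Multiset.mem_toFinset.2 (Multiset.mem_of_mem_erase hy))
          rw [hi, hj] at hle ⊢
          exact pow_dvd_pow 2 ((Nat.pow_le_pow_iff_right one_lt_two).1 hle)
        exact Nat.dvd_sub hyN hyx)
      (by omega)
    obtain ⟨t', ht'le, ht'sum⟩ := IH'
    refine ⟨x ::ₘ t', ?_, ?_⟩
    · calc x ::ₘ t' ≤ x ::ₘ s.erase x := Multiset.cons_le_cons x ht'le
        _ = s := hcons
    · simp [ht'sum]; omega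

/-- Representation: each multiset satisfying the hypothesis is the image of a
multiset of exponents. -/
lemma exists_rep (m : Multiset ℝ)
    (hm : ∀ x ∈ m, ∃ k : ℕ, 1 ≤ k ∧ x = (2/3) * (2:ℝ)^(-(k:ℤ))) :
    ∃ l : Multiset ℕ, (∀ k ∈ l, 1 ≤ k) ∧ l.map (fun k : ℕ => (2/3) * (2:ℝ)^(-(k:ℤ))) = m := by
  induction m using Multiset.induction_on with
  | empty => exact ⟨0, by simp, by simp⟩
  | cons x s ih =>
    obtain ⟨k, hk1, hkx⟩ := hm x (Multiset.mem_cons_self x s)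
    obtain ⟨l, hl1, hlm⟩ := ih (fun y hy => hm y (Multiset.mem_cons_of_mem hy))
    refine ⟨k ::ₘ l, ?_, by rw [Multiset.map_cons, hlm, ← hkx]⟩
    intro j hj
    rcases Multiset.mem_cons.1 hj with h | h
    · omega
    · exact hl1 j h

/-- Extraction: if the total is at least 1, a sub-multiset of sum exactly 1 exists. -/
lemma extract (m : Multiset ℝ)
    (hm : ∀ x ∈ m, ∃ k : ℕ, 1 ≤ k ∧ x = (2/3) * (2:ℝ)^(-(k:ℤ)))
    (h1 : 1 ≤ m.sum) : ∃ p, p ≤ m ∧ p.sum = 1 := by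
  obtain ⟨l, hl1, hlm⟩ := exists_rep m hm
  set f : ℕ → ℝ := fun k : ℕ => (2/3) * (2:ℝ)^(-(k:ℤ)) with hf
  set J : ℕ := l.sum + 1 with hJ
  have hkJ : ∀ k ∈ l, k ≤ J - 1 := by
    intro k hk
    have := Multiset.single_le_sum (fun x _ => Nat.zero_le x) k hk
    omega
  set w : ℕ → ℕ := fun k => 2 ^ (J - k) with hw
  set N : ℕ := 3 * 2 ^ (J - 1) with hN
  have hNpos : 0 < N := by positivity
  -- key pointwise identity
  have key : ∀ k ∈ l, f k * (N : ℝ) = (w k : ℝ) := by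
    intro k hk
    have hk1 := hl1 k hk
    have hkJ' := hkJ k hk
    have e1 : ((J - k : ℕ) : ℤ) = (J : ℤ) - k := by omega
    have e2 : ((J - 1 : ℕ) : ℤ) = (J : ℤ) - 1 := by omega
    have h2 : (2:ℝ) ≠ 0 := two_ne_zero
    rw [hf, hw, hN]
    push_cast
    rw [← zpow_natCast (2:ℝ) (J - k), ← zpow_natCast (2:ℝ) (J - 1), e1, e2]
    rw [show (2:ℝ)/3 * 2^(-(k:ℤ)) * (3 * 2^((J:ℤ)-1)) = 2 * (2^(-(k:ℤ)) * 2^((J:ℤ)-1)) by ring,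
      ← zpow_add₀ h2, show (J:ℤ)-k = (-(k:ℤ)+((J:ℤ)-1))+1 by ring, zpow_add_one₀ h2]
    ring
  have msum : m.sum * (N : ℝ) = (((l.map w).sum : ℕ) : ℝ) := by
    rw [← hlm]
    rw [← Multiset.sum_map_mul_right]
    rw [Multiset.map_congr rfl key]
    push_cast
    rw [Multiset.map_map]
    rfl
  have hsumN : N ≤ (l.map w).sum := by
    have : (N : ℝ) ≤ (((l.map w).sum : ℕ) : ℝ) := by
      rw [← msum]
      nlinarith [hNpos]
    exact_mod_cast this
  obtain ⟨t, htl, htsum⟩ := packA w l N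
    (fun x _ => ⟨J - x, rfl⟩)
    (fun x hx => by
      rw [hw, hN]
      exact Dvd.dvd.mul_left (pow_dvd_pow 2 (by have := hkJ x hx; have := hl1 x hx; omega)) 3)
    hsumN
  refine ⟨t.map f, ?_, ?_⟩
  · rw [← hlm]; exact Multiset.map_le_map htl
  · have key' : ∀ k ∈ t, f k * (N : ℝ) = (w k : ℝ) :=
      fun k hk => key k (Multiset.mem_of_le htl hk)
    have : (t.map f).sum * (N : ℝ) = (N : ℝ) := by
      rw [← Multiset.sum_map_mul_right, Multiset.map_congr rfl key']
      rw [show (Multiset.map (fun k => (w k : ℝ)) t) = Multiset.map (Nat.cast) (t.map w) by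
        rw [Multiset.map_map]; rfl]
      rw [← Nat.cast_multiset_sum, htsum]
    have hN0 : (N : ℝ) ≠ 0 := by positivity
    field_simp at this
    tauto

theorem stmt13 (m : Multiset ℝ)
    (hm : ∀ x ∈ m, ∃ k : ℕ, 1 ≤ k ∧ x = (2/3) * (2:ℝ)^(-(k:ℤ))) :
    ∃ (parts : Multiset (Multiset ℝ)) (r : Multiset ℝ),
      parts.sum + r = m ∧
      (parts.card : ℤ) ≤ ⌊m.sum⌋ ∧
      (∀ p ∈ parts, (p.map id).sum ≤ 1) ∧
      (r.map id).sum < 1 := by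
  induction m using Multiset.strongInductionOn with
  | _ m IH =>
    by_cases h1 : m.sum < 1
    · refine ⟨0, m, by simp, ?_, by simp, by simpa using h1⟩
      simp only [Multiset.card_zero, Nat.cast_zero]
      rw [Int.floor_nonneg]
      apply Multiset.sum_nonneg
      intro x hx
      obtain ⟨k, _, rfl⟩ := hm x hx
      positivity
    · push_neg at h1
      obtain ⟨p, hpm, hpsum⟩ := extract m hm h1
      have hp0 : p ≠ 0 := by rintro rfl; simp at hpsum
      have hlt : m - p < m := by
        apply lt_of_le_of_ne (tsub_le_self)
        intro h
        have hc : (m - p).card = m.card - p.card := Multiset.card_sub hpm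
        have hcp : 0 < p.card := Multiset.card_pos.2 hp0
        have hcm : p.card ≤ m.card := Multiset.card_le_card hpm
        have := congrArg Multiset.card h
        omega
      obtain ⟨parts', r, hsum', hcard', hparts', hr'⟩ := IH (m - p)
        (hlt) (fun x hx => hm x (Multiset.mem_of_le (tsub_le_self) hx))
      have hmp : p + (m - p) = m := add_tsub_cancel_of_le hpm
      have hmsum : (m - p).sum = m.sum - 1 := by
        have := congrArg Multiset.sum hmp
        rw [Multiset.sum_add, hpsum] at this
        linarith
      refine ⟨p ::ₘ parts', r, ?_, ?_, ?_, hr'⟩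
      · rw [Multiset.sum_cons, add_assoc, hsum', hmp]
      · rw [hmsum] at hcard'
        rw [show m.sum - 1 = m.sum - ((1:ℤ):ℝ) by norm_num, Int.floor_sub_intCast] at hcard'
        simp only [Multiset.card_cons]
        push_cast
        omega
      · intro q hq
        rcases Multiset.mem_cons.1 hq with h | h
        · subst h; simpa using hpsum.le
        · exact hparts' q h
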